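/- Mean and variance of the weighted cross-product of errors under the diagonality hypothesis (used in the proof of Theorem 5). Let m ≥ 2, let Z be a random vector in ℝ^m whose law is invariant under every orthogonal transformation of ℝ^m, let Σ = diag(σ₁₁, …, σ_mm) be a diagonal positive definite matrix, and set e = Σ^{1/2} Z, so that d := ‖e‖_Σ = ‖Z‖. Let w₁ : [0,∞) → ℝ be measurable, put ψ₁(u) = u w₁(u), and assume E[w₁(‖Z‖)² ‖Z‖⁴] < ∞. Then for every pair j ≠ k: (i) E[w₁(d) e_j e_k] = 0, and (ii) E[(w₁(d) e_j e_k)²] = (σ_jj σ_kk/(m(m+2))) E[ψ₁(‖e‖_Σ)² ‖e‖_Σ²]; in particular Var[w₁(d) e_j e_k] = (σ_jj σ_kk/(m(m+2))) E[ψ₁(‖e‖_Σ)² ‖e‖_Σ²]. -/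

import Mathlib

open MeasureTheory Matrix ProbabilityTheory

noncomputable section

/-- The Euclidean norm on `ℝ^m` (as plain functions `Fin m → ℝ`). -/
def eNorm {m : ℕ} (y : Fin m → ℝ) : ℝ := Real.sqrt (∑ i, (y i) ^ 2)

/-- `‖a‖_C = √(aᵀ C⁻¹ a)`. -/
def mnorm {m : ℕ} (C : Matrix (Fin m) (Fin m) ℝ) (a : Fin m → ℝ) : ℝ :=
  Real.sqrt (a ⬝ᵥ C⁻¹.mulVec a)

/-- A measure on `ℝ^m` is orthogonally (spherically) invariant if it is invariant
under every orthogonal linear map. -/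
def OrthoInvariant {m : ℕ} (μ : Measure (Fin m → ℝ)) : Prop :=
  ∀ O : Matrix (Fin m) (Fin m) ℝ, Oᵀ * O = 1 → μ.map O.mulVec = μ

/-! ### Auxiliary lemmas -/

lemma measurable_eNorm {m : ℕ} : Measurable (eNorm (m := m)) := by
  unfold eNorm; fun_prop

lemma eNorm_sq {m : ℕ} (z : Fin m → ℝ) : eNorm z ^ 2 = ∑ i, z i ^ 2 :=
  Real.sq_sqrt (Finset.sum_nonneg fun i _ => sq_nonneg _)

lemma sq_le_eNorm_sq {m : ℕ} (z : Fin m → ℝ) (a : Fin m) : z a ^ 2 ≤ eNorm z ^ 2 := by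
  rw [eNorm_sq]
  exact Finset.single_le_sum (fun i _ => sq_nonneg (z i)) (Finset.mem_univ a)

lemma eNorm_mulVec {m : ℕ} (O : Matrix (Fin m) (Fin m) ℝ) (hO : Oᵀ * O = 1)
    (z : Fin m → ℝ) : eNorm (O.mulVec z) = eNorm z := by
  unfold eNorm
  congr 1
  have h1 : ∀ v : Fin m → ℝ, ∑ i, v i ^ 2 = v ⬝ᵥ v := by
    intro v; simp [dotProduct, sq]
  rw [h1, h1, Matrix.dotProduct_mulVec, ← Matrix.mulVec_transpose,
    Matrix.mulVec_mulVec, hO, Matrix.one_mulVec]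

lemma sum_eq_two {m : ℕ} (a b : Fin m) (hab : a ≠ b) (f : Fin m → ℝ)
    (h : ∀ c, c ≠ a → c ≠ b → f c = 0) : ∑ i, f i = f a + f b := by
  rw [← Finset.sum_pair hab]
  exact (Finset.sum_subset (Finset.subset_univ {a, b}) (fun x _ hx => by
    simp only [Finset.mem_insert, Finset.mem_singleton, not_or] at hx
    exact h x hx.1 hx.2)).symm

lemma measurable_mulVec {m : ℕ} (O : Matrix (Fin m) (Fin m) ℝ) :
    Measurable O.mulVec := by
  refine measurable_pi_iff.mpr fun i => ?_
  simp only [Matrix.mulVec, dotProduct]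
  fun_prop

lemma integral_comp_ortho {m : ℕ} {μ : Measure (Fin m → ℝ)} (hμ : OrthoInvariant μ)
    {f : (Fin m → ℝ) → ℝ} (hf : Measurable f)
    (O : Matrix (Fin m) (Fin m) ℝ) (hO : Oᵀ * O = 1) :
    ∫ z, f (O.mulVec z) ∂μ = ∫ z, f z ∂μ := by
  conv_rhs => rw [← hμ O hO]
  rw [integral_map (measurable_mulVec O).aemeasurable hf.aestronglyMeasurable]

/-! #### Sign flip matrix -/

lemma flip_ortho {m : ℕ} (b : Fin m) :
    (Matrix.diagonal (fun i => if i = b then (-1:ℝ) else 1))ᵀ *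
      (Matrix.diagonal fun i => if i = b then (-1:ℝ) else 1) = 1 := by
  rw [Matrix.diagonal_transpose, Matrix.diagonal_mul_diagonal]
  have : (fun i => (if i = b then (-1:ℝ) else 1) * (if i = b then (-1:ℝ) else 1))
      = fun _ => (1:ℝ) := by
    funext i; by_cases h : i = b <;> simp [h]
  rw [this, Matrix.diagonal_one]

lemma flip_mulVec {m : ℕ} (b : Fin m) (z : Fin m → ℝ) (i : Fin m) :
    (Matrix.diagonal (fun i => if i = b then (-1:ℝ) else 1)).mulVec z i
      = if i = b then -z i else z i := by
  rw [Matrix.mulVec_diagonal]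
  by_cases h : i = b <;> simp [h]

/-! #### Plane rotation by 45 degrees -/

def rot {m : ℕ} (a b : Fin m) : Matrix (Fin m) (Fin m) ℝ :=
  Matrix.of fun i l =>
    if i = a then (if l = a then (Real.sqrt 2)⁻¹ else if l = b then (Real.sqrt 2)⁻¹ else 0)
    else if i = b then (if l = a then (Real.sqrt 2)⁻¹ else if l = b then -(Real.sqrt 2)⁻¹ else 0)
    else if l = i then 1 else 0

lemma rot_mulVec {m : ℕ} {a b : Fin m} (hab : a ≠ b) (z : Fin m → ℝ) :
    (rot a b).mulVec z = fun i =>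
      if i = a then (Real.sqrt 2)⁻¹ * (z a + z b)
      else if i = b then (Real.sqrt 2)⁻¹ * (z a - z b)
      else z i := by
  funext i
  simp only [Matrix.mulVec, dotProduct, rot, Matrix.of_apply]
  by_cases hia : i = a
  · simp only [if_pos hia]
    rw [sum_eq_two a b hab _ (fun c hca hcb => by simp [hca, hcb])]
    simp only [if_pos rfl, if_neg hab.symm, if_neg hab, ite_true]
    ring
  · by_cases hib : i = b
    · simp only [if_neg hia, if_pos hib]
      rw [sum_eq_two a b hab _ (fun c hca hcb => by simp [hca, hcb])]
      simp only [if_pos rfl, if_neg hab.symm, if_neg hab, ite_true]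
      ring
    · simp only [if_neg hia, if_neg hib]
      rw [Finset.sum_eq_single i (fun c _ hci => by simp [hci]) (by simp)]
      simp [hia, hib]

lemma rot_symm {m : ℕ} {a b : Fin m} : (rot a b)ᵀ = rot a b := by
  ext i l
  simp only [Matrix.transpose_apply, rot, Matrix.of_apply]
  by_cases hia : i = a <;> by_cases hib : i = b <;>
    by_cases hla : l = a <;> by_cases hlb : l = b <;>
    simp_all [eq_comm]

lemma mat_ext_of_mulVec {m : ℕ} {A B : Matrix (Fin m) (Fin m) ℝ}
    (h : ∀ z, A.mulVec z = B.mulVec z) : A = B := by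
  ext i l
  have := congrFun (h (Pi.single l 1)) i
  simpa [Matrix.mulVec_single] using this

lemma rot_ortho {m : ℕ} {a b : Fin m} (hab : a ≠ b) :
    (rot a b)ᵀ * rot a b = 1 := by
  have hs : (Real.sqrt 2)⁻¹ * (Real.sqrt 2)⁻¹ = 1/2 := by
    rw [← mul_inv, Real.mul_self_sqrt (by norm_num : (0:ℝ) ≤ 2)]
    norm_num
  rw [rot_symm]
  apply mat_ext_of_mulVec
  intro z
  rw [← Matrix.mulVec_mulVec, rot_mulVec hab z, rot_mulVec hab _, Matrix.one_mulVec]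
  funext i
  simp only []
  by_cases hia : i = a
  · simp only [if_pos hia, if_pos rfl, if_neg hab.symm, if_neg hab, hia, ite_true]
    linear_combination (2 * z a) * hs
  · by_cases hib : i = b
    · simp only [if_neg hia, if_pos hib, if_pos rfl, if_neg hab.symm, if_neg hab, hib, ite_true]
      linear_combination (2 * z b) * hs
    · simp [hia, hib]

/-! #### Transposition (swap) matrix -/

def swapM {m : ℕ} (a b : Fin m) : Matrix (Fin m) (Fin m) ℝ :=
  Matrix.of fun i l => if l = Equiv.swap a b i then (1:ℝ) else 0

lemma swapM_mulVec {m : ℕ} (a b : Fin m) (z : Fin m → ℝ) :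
    (swapM a b).mulVec z = fun i => z (Equiv.swap a b i) := by
  funext i
  simp only [Matrix.mulVec, dotProduct, swapM, Matrix.of_apply]
  rw [Finset.sum_eq_single (Equiv.swap a b i) (fun c _ hc => by simp [hc]) (by simp)]
  simp

lemma swapM_ortho {m : ℕ} (a b : Fin m) : (swapM a b)ᵀ * swapM a b = 1 := by
  ext p q
  simp only [Matrix.mul_apply, Matrix.transpose_apply, swapM, Matrix.of_apply,
    Matrix.one_apply]
  have key : ∀ i : Fin m, (p = Equiv.swap a b i) ↔ (i = Equiv.swap a b p) := by
    intro i
    constructor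
    · intro h; rw [h, Equiv.swap_apply_self]
    · intro h; rw [h, Equiv.swap_apply_self]
  rw [Finset.sum_eq_single (Equiv.swap a b p)
    (fun c _ hc => by rw [if_neg (fun h => hc ((key c).mp h))]; ring) (by simp)]
  rw [if_pos ((key _).mpr rfl)]
  by_cases hpq : p = q
  · simp [hpq, Equiv.swap_apply_self]
  · rw [if_neg hpq, if_neg (by rw [Equiv.swap_apply_self]; exact fun h => hpq h.symm)]
    ring

/-! #### The `mnorm` of `Σ^{1/2} z` is the euclidean norm of `z` -/

lemma mnorm_diag {m : ℕ} (σd : Fin m → ℝ) (hσd : ∀ i, 0 < σd i) (z : Fin m → ℝ) :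
    mnorm (Matrix.diagonal σd) ((Matrix.diagonal fun i => Real.sqrt (σd i)).mulVec z)
      = eNorm z := by
  have hinv : (Matrix.diagonal σd)⁻¹ = Matrix.diagonal (fun i => (σd i)⁻¹) := by
    apply Matrix.inv_eq_right_inv
    rw [Matrix.diagonal_mul_diagonal]
    have : (fun i => σd i * (σd i)⁻¹) = fun _ => (1:ℝ) := by
      funext i; exact mul_inv_cancel₀ (hσd i).ne'
    rw [this, Matrix.diagonal_one]
  unfold mnorm eNorm
  rw [hinv]
  congr 1
  simp only [dotProduct, Matrix.mulVec_diagonal]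
  refine Finset.sum_congr rfl fun i _ => ?_
  have h1 : Real.sqrt (σd i) * Real.sqrt (σd i) = σd i :=
    Real.mul_self_sqrt (hσd i).le
  calc Real.sqrt (σd i) * z i * ((σd i)⁻¹ * (Real.sqrt (σd i) * z i))
      = (Real.sqrt (σd i) * Real.sqrt (σd i)) * (σd i)⁻¹ * z i ^ 2 := by ring
    _ = z i ^ 2 := by rw [h1, mul_inv_cancel₀ (hσd i).ne', one_mul]

/-- **Mean and variance of the weighted cross-product of errors under the diagonality
hypothesis** (used in the proof of Theorem 5).  Here `μ` is the (spherically symmetric)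
law of `Z`, `Σ = diag(σ₁₁,…,σ_mm)` and `e = Σ^{1/2} Z`. -/
theorem weighted_crossproduct_mean_variance
    {m : ℕ} (hm : 2 ≤ m)
    (μ : Measure (Fin m → ℝ)) [IsProbabilityMeasure μ] (hμ : OrthoInvariant μ)
    (σd : Fin m → ℝ) (hσd : ∀ j, 0 < σd j)
    (w₁ : ℝ → ℝ) (hw₁ : Measurable w₁)
    (ψ₁ : ℝ → ℝ) (hψ₁ : ∀ u, ψ₁ u = u * w₁ u)
    (e : (Fin m → ℝ) → Fin m → ℝ)
    (he : ∀ z, e z = (Matrix.diagonal fun j => Real.sqrt (σd j)).mulVec z)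
    (hint : Integrable (fun z => (w₁ (eNorm z)) ^ 2 * (eNorm z) ^ 4) μ)
    (j k : Fin m) (hjk : j ≠ k) :
    (∫ z, w₁ (mnorm (Matrix.diagonal σd) (e z)) * e z j * e z k ∂μ = 0) ∧
    (∫ z, (w₁ (mnorm (Matrix.diagonal σd) (e z)) * e z j * e z k) ^ 2 ∂μ =
      (σd j * σd k / ((m : ℝ) * ((m : ℝ) + 2))) *
        ∫ z, (ψ₁ (mnorm (Matrix.diagonal σd) (e z))) ^ 2
          * (mnorm (Matrix.diagonal σd) (e z)) ^ 2 ∂μ) ∧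
    (variance (fun z => w₁ (mnorm (Matrix.diagonal σd) (e z)) * e z j * e z k) μ =
      (σd j * σd k / ((m : ℝ) * ((m : ℝ) + 2))) *
        ∫ z, (ψ₁ (mnorm (Matrix.diagonal σd) (e z))) ^ 2
          * (mnorm (Matrix.diagonal σd) (e z)) ^ 2 ∂μ) := by
  -- basic facts
  have hm2 : (0:ℝ) < (m:ℝ) * ((m:ℝ) + 2) := by
    have h2 : (2:ℝ) ≤ (m:ℝ) := by exact_mod_cast hm
    nlinarith
  have hco : ∀ (z : Fin m → ℝ) (i : Fin m), e z i = Real.sqrt (σd i) * z i := by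
    intro z i; rw [he]; exact Matrix.mulVec_diagonal _ _ _
  have hmn : ∀ z, mnorm (Matrix.diagonal σd) (e z) = eNorm z := by
    intro z; rw [he]; exact mnorm_diag σd hσd z
  have hsqσ : ∀ i : Fin m, Real.sqrt (σd i) ^ 2 = σd i := fun i => Real.sq_sqrt (hσd i).le
  -- measurability
  have hg : Measurable fun z : Fin m → ℝ => (w₁ (eNorm z)) ^ 2 :=
    (hw₁.comp measurable_eNorm).pow_const 2
  have hcoord : ∀ i : Fin m, Measurable fun z : Fin m → ℝ => z i :=
    fun i => measurable_pi_apply i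
  have habs : ∀ (z : Fin m → ℝ) (a : Fin m), |z a| ≤ eNorm z := by
    intro z a
    have h1 := sq_le_eNorm_sq z a
    have h2 : 0 ≤ eNorm z := Real.sqrt_nonneg _
    nlinarith [sq_abs (z a), abs_nonneg (z a)]
  -- integrability of all needed quartic moments
  have hbound : ∀ (h : (Fin m → ℝ) → ℝ), Measurable h →
      (∀ z, |h z| ≤ eNorm z ^ 4) →
      Integrable (fun z => (w₁ (eNorm z)) ^ 2 * h z) μ := by
    intro h hmh hb
    refine hint.mono' (hg.mul hmh).aestronglyMeasurable
      (Filter.Eventually.of_forall fun z => ?_)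
    rw [Real.norm_eq_abs, abs_mul, abs_of_nonneg (sq_nonneg (w₁ (eNorm z)))]
    exact mul_le_mul_of_nonneg_left (hb z) (sq_nonneg _)
  have hI22 : ∀ a b : Fin m,
      Integrable (fun z => (w₁ (eNorm z)) ^ 2 * (z a ^ 2 * z b ^ 2)) μ := by
    intro a b
    refine hbound _ (((hcoord a).pow_const 2).mul ((hcoord b).pow_const 2)) fun z => ?_
    have ha := habs z a; have hb := habs z b
    rw [abs_mul, abs_pow, abs_pow]
    calc |z a| ^ 2 * |z b| ^ 2 ≤ eNorm z ^ 2 * eNorm z ^ 2 := by gcongr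
      _ = eNorm z ^ 4 := by ring
  have hI40 : ∀ a : Fin m,
      Integrable (fun z => (w₁ (eNorm z)) ^ 2 * z a ^ 4) μ := by
    intro a
    refine hbound _ ((hcoord a).pow_const 4) fun z => ?_
    have ha := habs z a
    rw [abs_pow]
    gcongr
  -- all fourth moments are equal (swap invariance)
  have hswap : ∀ a b : Fin m,
      (∫ z, (w₁ (eNorm z)) ^ 2 * z a ^ 4 ∂μ) = ∫ z, (w₁ (eNorm z)) ^ 2 * z b ^ 4 ∂μ := by
    intro a b
    have hmf : Measurable fun z : Fin m → ℝ => (w₁ (eNorm z)) ^ 2 * z a ^ 4 :=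
      hg.mul ((hcoord a).pow_const 4)
    have h := integral_comp_ortho hμ hmf (swapM a b) (swapM_ortho a b)
    have key : ∀ z, (w₁ (eNorm ((swapM a b).mulVec z))) ^ 2 * ((swapM a b).mulVec z) a ^ 4
        = (w₁ (eNorm z)) ^ 2 * z b ^ 4 := by
      intro z
      rw [eNorm_mulVec _ (swapM_ortho a b), swapM_mulVec]
      simp [Equiv.swap_apply_left]
    exact (h.symm.trans (integral_congr_ae (Filter.Eventually.of_forall key)))
  set Aj : ℝ := ∫ z, (w₁ (eNorm z)) ^ 2 * z j ^ 4 ∂μ with hAj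
  -- cross moments via the 45° rotation
  have hB : ∀ a b : Fin m, a ≠ b →
      (∫ z, (w₁ (eNorm z)) ^ 2 * (z a ^ 2 * z b ^ 2) ∂μ) = (1/3) * Aj := by
    intro a b hab
    have hmf : Measurable fun z : Fin m → ℝ => (w₁ (eNorm z)) ^ 2 * (z a ^ 2 * z b ^ 2) :=
      hg.mul (((hcoord a).pow_const 2).mul ((hcoord b).pow_const 2))
    have h := integral_comp_ortho hμ hmf (rot a b) (rot_ortho hab)
    have hs : (Real.sqrt 2)⁻¹ * (Real.sqrt 2)⁻¹ = 1/2 := by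
      rw [← mul_inv, Real.mul_self_sqrt (by norm_num : (0:ℝ) ≤ 2)]
      norm_num
    have hs4 : (Real.sqrt 2)⁻¹ ^ 4 = 1/4 := by
      rw [show (Real.sqrt 2)⁻¹ ^ 4 = ((Real.sqrt 2)⁻¹ * (Real.sqrt 2)⁻¹) ^ 2 by ring, hs]
      norm_num
    have key : ∀ z, (w₁ (eNorm ((rot a b).mulVec z))) ^ 2
          * (((rot a b).mulVec z) a ^ 2 * ((rot a b).mulVec z) b ^ 2)
        = (1/4) * ((w₁ (eNorm z)) ^ 2 * z a ^ 4)
          - (1/2) * ((w₁ (eNorm z)) ^ 2 * (z a ^ 2 * z b ^ 2))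
          + (1/4) * ((w₁ (eNorm z)) ^ 2 * z b ^ 4) := by
      intro z
      rw [eNorm_mulVec _ (rot_ortho hab), rot_mulVec hab]
      simp only [if_pos rfl, if_neg hab.symm, ite_true]
      linear_combination ((w₁ (eNorm z)) ^ 2 * (z a + z b) ^ 2 * (z a - z b) ^ 2) * hs4
    have h2 : ∫ z, (w₁ (eNorm ((rot a b).mulVec z))) ^ 2
          * (((rot a b).mulVec z) a ^ 2 * ((rot a b).mulVec z) b ^ 2) ∂μ
        = (1/4) * (∫ z, (w₁ (eNorm z)) ^ 2 * z a ^ 4 ∂μ)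
          - (1/2) * (∫ z, (w₁ (eNorm z)) ^ 2 * (z a ^ 2 * z b ^ 2) ∂μ)
          + (1/4) * (∫ z, (w₁ (eNorm z)) ^ 2 * z b ^ 4 ∂μ) := by
      rw [integral_congr_ae (Filter.Eventually.of_forall key)]
      have i1 : Integrable (fun z : Fin m → ℝ =>
          (1:ℝ)/4 * ((w₁ (eNorm z)) ^ 2 * z a ^ 4)
            - (1:ℝ)/2 * ((w₁ (eNorm z)) ^ 2 * (z a ^ 2 * z b ^ 2))) μ := by
        exact ((hI40 a).const_mul _).sub ((hI22 a b).const_mul _)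
      have i2 : Integrable (fun z : Fin m → ℝ =>
          (1:ℝ)/4 * ((w₁ (eNorm z)) ^ 2 * z b ^ 4)) μ := (hI40 b).const_mul _
      have i3 : Integrable (fun z : Fin m → ℝ =>
          (1:ℝ)/4 * ((w₁ (eNorm z)) ^ 2 * z a ^ 4)) μ := (hI40 a).const_mul _
      have i4 : Integrable (fun z : Fin m → ℝ =>
          (1:ℝ)/2 * ((w₁ (eNorm z)) ^ 2 * (z a ^ 2 * z b ^ 2))) μ := (hI22 a b).const_mul _
      rw [integral_add i1 i2, integral_sub i3 i4,
        integral_const_mul, integral_const_mul, integral_const_mul]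
    have h3 := h.symm.trans h2
    rw [hswap a j, hswap b j] at h3
    rw [← hAj] at h3
    linarith
  -- the expansion of the fourth moment of the norm
  have hterm : ∀ i l : Fin m, (∫ z, (w₁ (eNorm z)) ^ 2 * (z i ^ 2 * z l ^ 2) ∂μ)
      = if i = l then Aj else (1/3) * Aj := by
    intro i l
    by_cases h : i = l
    · subst h
      rw [if_pos rfl]
      have hpt : ∀ z : Fin m → ℝ, (w₁ (eNorm z)) ^ 2 * (z i ^ 2 * z i ^ 2)
          = (w₁ (eNorm z)) ^ 2 * z i ^ 4 := fun z => by ring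
      rw [integral_congr_ae (Filter.Eventually.of_forall hpt)]
      exact hswap i j
    · rw [if_neg h]; exact hB i l h
  have hmain : (∫ z, (w₁ (eNorm z)) ^ 2 * eNorm z ^ 4 ∂μ)
      = (m : ℝ) * ((m : ℝ) + 2) / 3 * Aj := by
    have hpt : ∀ z : Fin m → ℝ, (w₁ (eNorm z)) ^ 2 * eNorm z ^ 4
        = ∑ i, ∑ l, (w₁ (eNorm z)) ^ 2 * (z i ^ 2 * z l ^ 2) := by
      intro z
      have h4 : eNorm z ^ 4 = (∑ i, z i ^ 2) * (∑ l, z l ^ 2) := by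
        rw [← eNorm_sq]; ring
      rw [h4, Finset.sum_mul_sum, Finset.mul_sum]
      exact Finset.sum_congr rfl fun i _ => Finset.mul_sum _ _ _
    rw [integral_congr_ae (Filter.Eventually.of_forall hpt)]
    rw [integral_finset_sum _ (fun i _ => integrable_finset_sum _ fun l _ => hI22 i l)]
    have : ∀ i : Fin m, (∫ z, ∑ l, (w₁ (eNorm z)) ^ 2 * (z i ^ 2 * z l ^ 2) ∂μ)
        = ((m : ℝ) + 2) / 3 * Aj := by
      intro i
      rw [integral_finset_sum _ (fun l _ => hI22 i l)]
      have h5 : ∀ l : Fin m, (∫ z, (w₁ (eNorm z)) ^ 2 * (z i ^ 2 * z l ^ 2) ∂μ)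
          = (1/3) * Aj + (if i = l then (2/3) * Aj else 0) := by
        intro l
        rw [hterm i l]
        split_ifs <;> ring
      rw [Finset.sum_congr rfl fun l _ => h5 l, Finset.sum_add_distrib,
        Finset.sum_const, Finset.sum_ite_eq _ i (fun _ => (2/3) * Aj)]
      simp only [Finset.card_univ, Fintype.card_fin, nsmul_eq_mul, Finset.mem_univ,
        if_true]
      ring
    rw [Finset.sum_congr rfl fun i _ => this i, Finset.sum_const]
    simp only [Finset.card_univ, Fintype.card_fin, nsmul_eq_mul]
    ring
  -- Part (i): the mean vanishes
  have part1 : ∫ z, w₁ (mnorm (Matrix.diagonal σd) (e z)) * e z j * e z k ∂μ = 0 := by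
    have hrw : ∀ z : Fin m → ℝ, w₁ (mnorm (Matrix.diagonal σd) (e z)) * e z j * e z k
        = w₁ (eNorm z) * (Real.sqrt (σd j) * z j) * (Real.sqrt (σd k) * z k) := by
      intro z; rw [hmn, hco, hco]
    rw [integral_congr_ae (Filter.Eventually.of_forall hrw)]
    set f : (Fin m → ℝ) → ℝ :=
      fun z => w₁ (eNorm z) * (Real.sqrt (σd j) * z j) * (Real.sqrt (σd k) * z k) with hf
    have hmf : Measurable f :=
      ((hw₁.comp measurable_eNorm).mul ((hcoord j).const_mul _)).mul
        ((hcoord k).const_mul _)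
    have h := integral_comp_ortho hμ hmf
      (Matrix.diagonal fun i => if i = j then (-1:ℝ) else 1) (flip_ortho j)
    have key : ∀ z, f ((Matrix.diagonal fun i => if i = j then (-1:ℝ) else 1).mulVec z)
        = - f z := by
      intro z
      simp only [hf]
      rw [eNorm_mulVec _ (flip_ortho j), flip_mulVec, flip_mulVec,
        if_pos rfl, if_neg hjk.symm]
      ring
    have h2 : ∫ z, f ((Matrix.diagonal fun i => if i = j then (-1:ℝ) else 1).mulVec z) ∂μ
        = - ∫ z, f z ∂μ := by
      rw [integral_congr_ae (Filter.Eventually.of_forall key), integral_neg]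
    have h3 : (∫ z, f z ∂μ) = - ∫ z, f z ∂μ := (h.symm.trans h2)
    linarith
  -- Part (ii): the second moment
  have hrhs : (∫ z, (ψ₁ (mnorm (Matrix.diagonal σd) (e z))) ^ 2
        * (mnorm (Matrix.diagonal σd) (e z)) ^ 2 ∂μ)
      = ∫ z, (w₁ (eNorm z)) ^ 2 * eNorm z ^ 4 ∂μ := by
    refine integral_congr_ae (Filter.Eventually.of_forall fun z => ?_)
    simp only [hmn, hψ₁]
    ring
  have hlhs2 : (∫ z, (w₁ (mnorm (Matrix.diagonal σd) (e z)) * e z j * e z k) ^ 2 ∂μ)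
      = σd j * σd k * ((1/3) * Aj) := by
    have hrw : ∀ z : Fin m → ℝ, (w₁ (mnorm (Matrix.diagonal σd) (e z)) * e z j * e z k) ^ 2
        = (σd j * σd k) * ((w₁ (eNorm z)) ^ 2 * (z j ^ 2 * z k ^ 2)) := by
      intro z
      rw [hmn, hco, hco]
      linear_combination ((w₁ (eNorm z)) ^ 2 * z j ^ 2 * z k ^ 2 * Real.sqrt (σd k) ^ 2) * hsqσ j
        + ((w₁ (eNorm z)) ^ 2 * z j ^ 2 * z k ^ 2 * σd j) * hsqσ k
    rw [integral_congr_ae (Filter.Eventually.of_forall hrw), integral_const_mul,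
      hB j k hjk]
  have part2 : (∫ z, (w₁ (mnorm (Matrix.diagonal σd) (e z)) * e z j * e z k) ^ 2 ∂μ)
      = (σd j * σd k / ((m : ℝ) * ((m : ℝ) + 2))) *
        ∫ z, (ψ₁ (mnorm (Matrix.diagonal σd) (e z))) ^ 2
          * (mnorm (Matrix.diagonal σd) (e z)) ^ 2 ∂μ := by
    rw [hlhs2, hrhs, hmain]
    field_simp
  refine ⟨part1, part2, ?_⟩
  -- Part (iii): the variance
  have hpz : ∀ z : Fin m → ℝ, w₁ (mnorm (Matrix.diagonal σd) (e z)) * e z j * e z k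
      = w₁ (eNorm z) * (Real.sqrt (σd j) * z j) * (Real.sqrt (σd k) * z k) := by
    intro z; rw [hmn, hco, hco]
  have hXeq : (fun z => w₁ (mnorm (Matrix.diagonal σd) (e z)) * e z j * e z k)
      = fun z : Fin m → ℝ =>
        w₁ (eNorm z) * (Real.sqrt (σd j) * z j) * (Real.sqrt (σd k) * z k) :=
    funext hpz
  have hXmeas : Measurable fun z : Fin m → ℝ =>
      w₁ (eNorm z) * (Real.sqrt (σd j) * z j) * (Real.sqrt (σd k) * z k) :=
    ((hw₁.comp measurable_eNorm).mul ((hcoord j).const_mul _)).mul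
      ((hcoord k).const_mul _)
  have hX2int : Integrable (fun z =>
      (w₁ (eNorm z) * (Real.sqrt (σd j) * z j) * (Real.sqrt (σd k) * z k)) ^ 2) μ := by
    have hrw : ∀ z : Fin m → ℝ,
        (w₁ (eNorm z) * (Real.sqrt (σd j) * z j) * (Real.sqrt (σd k) * z k)) ^ 2
        = (σd j * σd k) * ((w₁ (eNorm z)) ^ 2 * (z j ^ 2 * z k ^ 2)) := by
      intro z
      linear_combination ((w₁ (eNorm z)) ^ 2 * z j ^ 2 * z k ^ 2 * Real.sqrt (σd k) ^ 2) * hsqσ j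
        + ((w₁ (eNorm z)) ^ 2 * z j ^ 2 * z k ^ 2 * σd j) * hsqσ k
    exact (((hI22 j k).const_mul (σd j * σd k)).congr
      (Filter.Eventually.of_forall fun z => (hrw z).symm))
  have hmem : MemLp (fun z : Fin m → ℝ =>
      w₁ (eNorm z) * (Real.sqrt (σd j) * z j) * (Real.sqrt (σd k) * z k)) 2 μ :=
    (memLp_two_iff_integrable_sq hXmeas.aestronglyMeasurable).mpr hX2int
  rw [hXeq, variance_eq_sub hmem]
  have e1 : (∫ z, ((fun z : Fin m → ℝ =>
        w₁ (eNorm z) * (Real.sqrt (σd j) * z j) * (Real.sqrt (σd k) * z k)) ^ 2) z ∂μ)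
      = ∫ z, (w₁ (mnorm (Matrix.diagonal σd) (e z)) * e z j * e z k) ^ 2 ∂μ := by
    refine integral_congr_ae (Filter.Eventually.of_forall fun z => ?_)
    simp only [Pi.pow_apply, hpz]
  have e2 : (∫ z, (fun z : Fin m → ℝ =>
        w₁ (eNorm z) * (Real.sqrt (σd j) * z j) * (Real.sqrt (σd k) * z k)) z ∂μ)
      = ∫ z, w₁ (mnorm (Matrix.diagonal σd) (e z)) * e z j * e z k ∂μ := by
    refine integral_congr_ae (Filter.Eventually.of_forall fun z => ?_)
    simp only [hpz]
  rw [e1, e2, part2, part1]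
  ring
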